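/- Let p ≥ 0 and 0 ≤ i_0 < … < i_p ≤ n. Then for every t ∈ ℝ^{n+1} with Σ_j t_j = 1 and all v_0,…,v_p ∈ V: (d ω̄_{i_0,…,i_p})(t)(v_0,…,v_p) = Σ_{k=0}^n ω̄_{k,i_0,…,i_p}(t)(v_0,…,v_p), where ω̄_{k,i_0,…,i_p} is the Whitney form of the (p+2)-tuple (k, i_0, …, i_p) (this form vanishes identically when k ∈ {i_0,…,i_p}). In particular the Whitney map is a cochain map: d∘W = W∘d, where d on cochains is the simplicial coboundary. -/

import Mathlib

open MeasureTheory
open scoped BigOperators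

noncomputable section

/-- ℝ^{n+1} -/
abbrev Vec (n : ℕ) := Fin (n + 1) → ℝ

/-- standard basis vector e_i -/
def eVec (n : ℕ) (i : Fin (n + 1)) : Vec n := Pi.single i 1

/-- Raw (not necessarily alternating) inhomogeneous forms: a family of
degree-`p` "forms" given as functions of a point and a `p`-tuple of vectors. -/
def MForm (n : ℕ) := (p : ℕ) → Vec n → (Fin p → Vec n) → ℝ

/-- Embed a raw `p`-form as an inhomogeneous form concentrated in degree `p`. -/
def ofDeg (n p : ℕ) (ω : Vec n → (Fin p → Vec n) → ℝ) : MForm n :=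
  fun q t v => if h : q = p then ω t (fun i => v (Fin.cast h.symm i)) else 0

/-- Exterior derivative. -/
def exd (n : ℕ) (F : MForm n) : MForm n :=
  fun q => match q with
  | 0 => fun _ _ => 0
  | (p + 1) => fun t v =>
      ∑ j : Fin (p + 1), (-1 : ℝ) ^ (j : ℕ) *
        fderiv ℝ (fun x => F p x (fun i => v (Fin.succAbove j i))) t (v j)

/-- The Dupont operator `h^i`. -/
def hOp (n : ℕ) (i : Fin (n + 1)) (F : MForm n) : MForm n :=
  fun p t v =>
    ∫ s in (0:ℝ)..1, (1 - s) ^ p *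
      F (p + 1) ((1 - s) • t + s • eVec n i) (Fin.cons (eVec n i - t) v)

/-- Iterated Dupont operators `h^{i_k} ∘ ⋯ ∘ h^{i_0}`. -/
def hTuple (n : ℕ) {m : ℕ} (c : Fin m → Fin (n + 1)) (F : MForm n) : MForm n :=
  (List.ofFn c).foldl (fun G i => hOp n i G) F

/-- The Whitney form ω_{c 0, …, c p}. -/
def whitney (n p : ℕ) (c : Fin (p + 1) → Fin (n + 1)) :
    Vec n → (Fin p → Vec n) → ℝ :=
  fun t v => ∑ l : Fin (p + 1), (-1 : ℝ) ^ (l : ℕ) * t (c l) *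
    Matrix.det (Matrix.of fun a b : Fin p => v a (c (Fin.succAbove l b)))

/-- ω̄ = p! ω. -/
def whitneyBar (n p : ℕ) (c : Fin (p + 1) → Fin (n + 1)) :
    Vec n → (Fin p → Vec n) → ℝ :=
  fun t v => (Nat.factorial p : ℝ) * whitney n p c t v

/-- Wedge of a homogeneous `k`-form with an inhomogeneous form. -/
def wedgeHom (n k : ℕ) (α : Vec n → (Fin k → Vec n) → ℝ) (G : MForm n) : MForm n :=
  fun q t v =>
    if h : k ≤ q then
      ((Nat.factorial k : ℝ) * (Nat.factorial (q - k) : ℝ))⁻¹ *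
        ∑ σ : Equiv.Perm (Fin q), ((Equiv.Perm.sign σ : ℤ) : ℝ) *
          α t (fun i => v (σ (Fin.castLE h i))) *
          G (q - k) t (fun j => v (σ (Fin.cast (Nat.add_sub_cancel' h) (Fin.natAdd k j))))
    else 0

open scoped Classical in
/-- The Dupont homotopy. -/
def sDup (n : ℕ) (F : MForm n) : MForm n :=
  fun q t v => - ∑ k ∈ Finset.range n,
    ∑ c ∈ Finset.univ.filter (fun c : Fin (k + 1) → Fin (n + 1) => StrictMono c),
      wedgeHom n k (whitneyBar n k c) (hTuple n c F) q t v

/-- The unit cube [0,1]^p. -/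
def cubeSet (p : ℕ) : Set (Fin p → ℝ) := Set.univ.pi fun _ => Set.Icc (0:ℝ) 1

/-- Canonical parametrization of the simplex with vertices `verts`. -/
def GmapV (n p : ℕ) (verts : Fin (p + 1) → Vec n) : (Fin p → ℝ) → Vec n :=
  fun s => ∑ l : Fin (p + 1),
    ((∏ b ∈ Finset.univ.filter (fun b : Fin p => (b : ℕ) < (l : ℕ)), s b) *
      (if h : (l : ℕ) < p then 1 - s ⟨l, h⟩ else 1)) • verts l

/-- Integral of a raw `p`-form over the simplex with vertices `verts`. -/
def simplexIntV (n p : ℕ) (verts : Fin (p + 1) → Vec n)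
    (ω : Vec n → (Fin p → Vec n) → ℝ) : ℝ :=
  ∫ s in cubeSet p, ω (GmapV n p verts s)
      (fun a => fderiv ℝ (GmapV n p verts) s (Pi.single a 1))

/-- ∫_{[c 0, …, c p]} ω. -/
def simplexInt (n p : ℕ) (c : Fin (p + 1) → Fin (n + 1))
    (ω : Vec n → (Fin p → Vec n) → ℝ) : ℝ :=
  simplexIntV n p (fun l => eVec n (c l)) ω

open scoped Classical in
/-- (WR)(ω) for a homogeneous raw p-form ω. -/
def WRhom (n p : ℕ) (ω : Vec n → (Fin p → Vec n) → ℝ) :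
    Vec n → (Fin p → Vec n) → ℝ :=
  fun t v =>
    ∑ c ∈ Finset.univ.filter (fun c : Fin (p + 1) → Fin (n + 1) => StrictMono c),
      simplexInt n p c ω * whitneyBar n p c t v

open scoped Classical in
/-- The simplicial coboundary of the dual basis cochain of the simplex `σ`,
as a cochain (a function on finsets): `(d σ̂)(τ)` is the coefficient of `σ`
in `∂τ`. -/
def dCoD (n : ℕ) (σ : Finset (Fin (n + 1))) : Finset (Fin (n + 1)) → ℝ :=
  fun τ => ∑ w ∈ τ,
    if τ.erase w = σ then (-1 : ℝ) ^ ((τ.filter (fun u => u < w)).card) else 0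

open scoped Classical in
/-- The Whitney map, sending a simplicial cochain `y` to the corresponding
(inhomogeneous) Whitney form `∑_σ y(σ) ω̄_σ`. -/
def WmapF (n : ℕ) (y : Finset (Fin (n + 1)) → ℝ) : MForm n :=
  fun q t v => ∑ S : Finset (Fin (n + 1)),
    if h : S.card = q + 1 then
      y S * whitneyBar n q (fun a => (S.orderIsoOfFin h a : Fin (n + 1))) t v
    else 0

private lemma ofDeg_self (n p : ℕ) (ω : Vec n → (Fin p → Vec n) → ℝ) (x : Vec n)
    (w : Fin p → Vec n) : ofDeg n p ω p x w = ω x w := by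
  simp [ofDeg]

open Finset in
private lemma whitney_eq_det (n p : ℕ) (c : Fin (p+1) → Fin (n+1)) (t : Vec n)
    (v : Fin p → Vec n) :
    whitney n p c t v = Matrix.det (Matrix.of fun a l : Fin (p+1) =>
      Fin.cases (t (c l)) (fun a' => v a' (c l)) a) := by
  rw [Matrix.det_succ_row_zero]
  unfold whitney
  refine Finset.sum_congr rfl fun l _ => ?_
  simp [Matrix.submatrix]

private lemma fderiv_linear_sum {n m : ℕ} (g : Fin m → ℝ) (d : Fin m → Fin (n+1)) (t u : Vec n) :
    fderiv ℝ (fun x : Vec n => ∑ l, g l * x (d l)) t u = ∑ l, g l * u (d l) := by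
  have h : HasFDerivAt (fun x : Vec n => ∑ l, g l * x (d l))
      (∑ l, g l • ((ContinuousLinearMap.proj (d l) : Vec n →L[ℝ] ℝ))) t := by
    apply HasFDerivAt.fun_sum
    intro l _
    simpa using ((ContinuousLinearMap.proj (R := ℝ)
      (φ := fun _ : Fin (n+1) => ℝ) (d l)).hasFDerivAt (x := t)).const_mul (g l)
  simp [h.fderiv]

private lemma whitney_comp_perm (n p : ℕ) (c : Fin (p+1) → Fin (n+1))
    (τ : Equiv.Perm (Fin (p+1))) (t : Vec n) (v : Fin p → Vec n) :
    whitney n p (fun i => c (τ i)) t v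
      = ((Equiv.Perm.sign τ : ℤ) : ℝ) * whitney n p c t v := by
  rw [whitney_eq_det, whitney_eq_det]
  have : (Matrix.of fun a l : Fin (p+1) =>
      Fin.cases (motive := fun _ => ℝ) (t (c (τ l))) (fun a' => v a' (c (τ l))) a)
      = (Matrix.of fun a l : Fin (p+1) =>
      Fin.cases (motive := fun _ => ℝ) (t (c l)) (fun a' => v a' (c l)) a).submatrix id τ := by
    ext a l
    rfl
  rw [this, Matrix.det_permute']

private lemma whitney_repeat (n p : ℕ) (c : Fin (p+1) → Fin (n+1)) {i j : Fin (p+1)}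
    (hij : i ≠ j) (h : c i = c j) (t : Vec n) (v : Fin p → Vec n) :
    whitney n p c t v = 0 := by
  rw [whitney_eq_det]
  exact Matrix.det_zero_of_column_eq hij (fun k => by simp [h])

private lemma whitney_exd (n p : ℕ) (c : Fin (p+1) → Fin (n+1))
    (t : Vec n) (ht : (∑ j, t j) = 1)
    (v : Fin (p+1) → Vec n) (hv : ∀ a, ∑ j, v a j = 0) :
    exd n (ofDeg n p (whitneyBar n p c)) (p + 1) t v
      = ∑ k : Fin (n + 1), whitneyBar n (p + 1) (Fin.cons k c) t v := by
  set M : Matrix (Fin (p+1)) (Fin (p+1)) ℝ := Matrix.of fun a b => v a (c b) with hM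
  -- LHS
  have hF : ∀ (j : Fin (p+1)) (x : Vec n),
      ofDeg n p (whitneyBar n p c) p x (fun i => v (Fin.succAbove j i))
        = ∑ l : Fin (p+1), ((p.factorial : ℝ) * (-1)^(l:ℕ) *
            Matrix.det (M.submatrix j.succAbove l.succAbove)) * x (c l) := by
    intro j x
    rw [ofDeg_self]
    unfold whitneyBar whitney
    rw [Finset.mul_sum]
    refine Finset.sum_congr rfl fun l _ => ?_
    have h2 : (Matrix.of fun a b : Fin p =>
        (fun i => v (Fin.succAbove j i)) a (c (Fin.succAbove l b)))
        = M.submatrix j.succAbove l.succAbove := rfl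
    rw [h2]; ring
  have hL : exd n (ofDeg n p (whitneyBar n p c)) (p + 1) t v
      = ∑ j : Fin (p+1), (-1:ℝ)^(j:ℕ) * ∑ l : Fin (p+1),
          ((p.factorial : ℝ) * (-1)^(l:ℕ) * Matrix.det (M.submatrix j.succAbove l.succAbove))
            * (v j) (c l) := by
    refine Finset.sum_congr rfl fun j _ => ?_
    congr 1
    rw [show (fun x => ofDeg n p (whitneyBar n p c) p x fun i => v (Fin.succAbove j i))
        = fun x => ∑ l : Fin (p+1), ((p.factorial : ℝ) * (-1)^(l:ℕ) *
            Matrix.det (M.submatrix j.succAbove l.succAbove)) * x (c l) from funext (hF j)]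
    exact fderiv_linear_sum _ _ t (v j)
  have key : ∀ j : Fin (p+1), (-1:ℝ)^(j:ℕ) * ∑ l : Fin (p+1),
      ((p.factorial : ℝ) * (-1)^(l:ℕ) * Matrix.det (M.submatrix j.succAbove l.succAbove))
        * (v j) (c l) = (p.factorial : ℝ) * M.det := by
    intro j
    rw [Matrix.det_succ_row M j, Finset.mul_sum, Finset.mul_sum]
    refine Finset.sum_congr rfl fun l _ => ?_
    have hjl : v j (c l) = M j l := rfl
    rw [hjl, pow_add]
    ring
  rw [hL, Finset.sum_congr rfl fun j _ => key j, Finset.sum_const, Finset.card_univ,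
    Fintype.card_fin, nsmul_eq_mul]
  -- RHS
  set N : Fin (n+1) → Fin (p+1) → Matrix (Fin (p+1)) (Fin (p+1)) ℝ :=
    fun k l => Matrix.of fun a b => Fin.cases (motive := fun _ => ℝ) (v a k)
      (fun b' => v a (c (Fin.succAbove l b'))) b with hN
  have hterm : ∀ k, whitneyBar n (p+1) (Fin.cons k c) t v
      = ((p+1).factorial : ℝ) * (t k * M.det
          + ∑ l : Fin (p+1), (-1:ℝ)^((l:ℕ)+1) * t (c l) * Matrix.det (N k l)) := by
    intro k
    unfold whitneyBar whitney
    rw [Fin.sum_univ_succ]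
    congr 2
    · have h0 : (Matrix.of fun a b : Fin (p+1) =>
          v a ((Fin.cons k c : Fin (p+2) → Fin (n+1)) (Fin.succAbove 0 b))) = M := by
        ext a b
        simp [hM, Fin.succAbove_zero, Fin.cons_succ]
      rw [h0]
      simp
    · refine Finset.sum_congr rfl fun l _ => ?_
      have h1 : (Matrix.of fun a b : Fin (p+1) =>
          v a ((Fin.cons k c : Fin (p+2) → Fin (n+1)) (Fin.succAbove l.succ b))) = N k l := by
        ext a b
        refine Fin.cases ?_ (fun b' => ?_) b
        · simp [hN, Fin.succ_succAbove_zero]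
        · simp [hN, Fin.succ_succAbove_succ]
      rw [h1]
      simp [Fin.cons_succ]
  have hcol : ∀ l : Fin (p+1), ∑ k : Fin (n+1), Matrix.det (N k l) = 0 := by
    intro l
    set B : Matrix (Fin (p+1)) (Fin (p+1)) ℝ := Matrix.of fun a b =>
      Fin.cases (motive := fun _ => ℝ) (0:ℝ) (fun b' => v a (c (Fin.succAbove l b'))) b with hB
    have hrep : ∀ k, N k l = B.updateCol 0 (fun a => v a k) := by
      intro k
      ext a b
      refine Fin.cases ?_ (fun b' => ?_) b
      · simp [hN, Matrix.updateCol_apply]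
      · simp [hN, hB, Matrix.updateCol_apply, Fin.succ_ne_zero]
    let f : (Fin (p+1) → ℝ) →ₗ[ℝ] ℝ :=
      { toFun := fun w => Matrix.det (B.updateCol 0 w)
        map_add' := fun a b => Matrix.det_updateCol_add B 0 a b
        map_smul' := fun r a => by simpa using Matrix.det_updateCol_smul B 0 r a }
    have hsum : ∑ k : Fin (n+1), f (fun a => v a k)
        = f (∑ k : Fin (n+1), fun a => v a k) := (map_sum f _ _).symm
    have hzero : (∑ k : Fin (n+1), fun a => v a k : Fin (p+1) → ℝ) = 0 := by
      funext a
      simpa [Finset.sum_apply] using hv a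
    calc ∑ k : Fin (n+1), Matrix.det (N k l)
        = ∑ k : Fin (n+1), f (fun a => v a k) := by
          refine Finset.sum_congr rfl fun k _ => ?_
          rw [hrep k]; rfl
      _ = f 0 := by rw [hsum, hzero]
      _ = 0 := by
          show Matrix.det (B.updateCol 0 0) = 0
          exact Matrix.det_eq_zero_of_column_eq_zero 0 (by simp)
  calc (((p+1) : ℕ) : ℝ) * ((p.factorial : ℝ) * M.det)
      = ((p+1).factorial : ℝ) * ((∑ k, t k) * M.det
          + ∑ l : Fin (p+1), (-1:ℝ)^((l:ℕ)+1) * t (c l)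
              * ∑ k : Fin (n+1), Matrix.det (N k l)) := by
        rw [ht]
        rw [Finset.sum_congr rfl fun l _ => by rw [hcol l]]
        simp only [mul_zero, Finset.sum_const_zero, add_zero]
        push_cast [Nat.factorial_succ]
        ring
    _ = ∑ k : Fin (n+1), whitneyBar n (p+1) (Fin.cons k c) t v := by
        rw [Finset.sum_congr rfl fun k _ => hterm k, ← Finset.mul_sum,
          Finset.sum_add_distrib, ← Finset.sum_mul, Finset.sum_comm]
        congr 1
        congr 1
        exact Finset.sum_congr rfl fun l _ => Finset.mul_sum _ _ _

private lemma whitneyBar_cons_insert (n p : ℕ) (σ : Finset (Fin (n+1))) (h : σ.card = p+1)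
    (k : Fin (n+1)) (hk : k ∉ σ) (h2 : (insert k σ).card = p+2)
    (t : Vec n) (v : Fin (p+1) → Vec n) :
    whitneyBar n (p+1) (Fin.cons k (fun a => (σ.orderIsoOfFin h a : Fin (n+1)))) t v
      = (-1:ℝ)^((σ.filter (fun u => u < k)).card)
        * whitneyBar n (p+1) (fun a => ((insert k σ).orderIsoOfFin h2 a : Fin (n+1))) t v := by
  set c'' : Fin (p+2) → Fin (n+1) :=
    fun a => ((insert k σ).orderIsoOfFin h2 a : Fin (n+1)) with hc''
  have hc''emb : c'' = ⇑((insert k σ).orderEmbOfFin h2) := by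
    funext a
    simp only [hc'', Finset.coe_orderIsoOfFin_apply]
  have hc''mono : StrictMono c'' := by
    rw [hc''emb]; exact ((insert k σ).orderEmbOfFin h2).strictMono
  set m : Fin (p+2) := ((insert k σ).orderIsoOfFin h2).symm ⟨k, Finset.mem_insert_self k σ⟩
    with hm
  have hcm : c'' m = k := by
    rw [hc'', hm]
    simp
  have hcomp : (fun a : Fin (p+1) => c'' (m.succAbove a))
      = ⇑(σ.orderEmbOfFin h) := by
    refine Finset.orderEmbOfFin_unique h (fun a => ?_) ?_
    · have hmem : c'' (m.succAbove a) ∈ insert k σ := by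
        rw [hc''emb]; exact Finset.orderEmbOfFin_mem _ h2 _
      have hne : c'' (m.succAbove a) ≠ k := by
        rw [← hcm]
        exact fun he => Fin.succAbove_ne m a (hc''mono.injective he)
      exact Finset.mem_of_mem_insert_of_ne hmem hne
    · exact hc''mono.comp (Fin.strictMono_succAbove m)
  have hconseq : (Fin.cons k (fun a => (σ.orderIsoOfFin h a : Fin (n+1)))
        : Fin (p+2) → Fin (n+1))
      = fun a => c'' (m.cycleRange.symm a) := by
    funext a
    refine Fin.cases ?_ (fun a' => ?_) a
    · rw [Fin.cons_zero, Fin.cycleRange_symm_zero, hcm]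
    · rw [Fin.cons_succ, Fin.cycleRange_symm_succ]
      have := congrFun hcomp a'
      rw [this, Finset.coe_orderIsoOfFin_apply]
  -- m.val = card of filter
  have hmval : (m : ℕ) = (σ.filter (fun u => u < k)).card := by
    have himg : (insert k σ).filter (fun u => u < k)
        = (Finset.univ.filter (fun j : Fin (p+2) => j < m)).image c'' := by
      ext x
      simp only [Finset.mem_filter, Finset.mem_image, Finset.mem_univ, true_and]
      constructor
      · rintro ⟨hxS, hxk⟩
        refine ⟨((insert k σ).orderIsoOfFin h2).symm ⟨x, hxS⟩, ?_, ?_⟩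
        · have hx : c'' (((insert k σ).orderIsoOfFin h2).symm ⟨x, hxS⟩) = x := by
            rw [hc'']; simp
          rw [← hcm] at hxk
          rw [← hx] at hxk
          exact hc''mono.lt_iff_lt.mp hxk
        · rw [hc'']; simp
      · rintro ⟨j, hjm, rfl⟩
        constructor
        · rw [hc''emb]; exact Finset.orderEmbOfFin_mem _ h2 _
        · rw [← hcm]; exact hc''mono hjm
    have hfil : σ.filter (fun u => u < k) = (insert k σ).filter (fun u => u < k) := by
      rw [Finset.filter_insert, if_neg (lt_irrefl k)]
    rw [hfil, himg, Finset.card_image_of_injective _ hc''mono.injective]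
    have : Finset.univ.filter (fun j : Fin (p+2) => j < m) = Finset.Iio m := by
      ext j; simp
    rw [this, Fin.card_Iio]
  have hsign : ((Equiv.Perm.sign (m.cycleRange.symm) : ℤ) : ℝ)
      = (-1:ℝ)^((σ.filter (fun u => u < k)).card) := by
    rw [Equiv.Perm.sign_symm, Fin.sign_cycleRange, ← hmval]
    push_cast
    ring
  rw [hconseq]
  unfold whitneyBar
  rw [whitney_comp_perm n (p+1) c'' (m.cycleRange.symm) t v, hsign]
  ring

/-- `d ω̄_{i_0…i_p} = ∑_k ω̄_{k,i_0,…,i_p}` (on tangent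
tuples along the hyperplane `∑ t_j = 1`), and consequently `d ∘ W = W ∘ d`. -/
theorem whitney_map_is_cochain_map (n p : ℕ)
    (c : Fin (p + 1) → Fin (n + 1)) (hc : StrictMono c) :
    -- (1) dω̄ = ∑_k ω̄_{k, i_0, …, i_p}
    (∀ t : Vec n, (∑ j, t j) = 1 →
      ∀ v : Fin (p + 1) → Vec n, (∀ a, ∑ j, v a j = 0) →
        exd n (ofDeg n p (whitneyBar n p c)) (p + 1) t v
          = ∑ k : Fin (n + 1), whitneyBar n (p + 1) (Fin.cons k c) t v)
    ∧
    -- (2) d ∘ W = W ∘ d on the dual basis cochains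
    (∀ σ : Finset (Fin (n + 1)), σ.Nonempty →
      ∀ q : ℕ, ∀ t : Vec n, (∑ j, t j) = 1 →
        ∀ v : Fin q → Vec n, (∀ a, ∑ j, v a j = 0) →
          exd n (WmapF n (fun τ => if τ = σ then 1 else 0)) q t v
            = WmapF n (dCoD n σ) q t v) := by
  constructor
  · intro t ht v hv
    exact whitney_exd n p c t ht v hv
  · intro σ hσ q t ht v hv
    cases q with
    | zero =>
      show (0:ℝ) = WmapF n (dCoD n σ) 0 t v
      symm
      unfold WmapF
      refine Finset.sum_eq_zero fun S _ => ?_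
      split
      · rename_i hcard
        have h0 : dCoD n σ S = 0 := by
          unfold dCoD
          refine Finset.sum_eq_zero fun w hw => ?_
          rw [if_neg]
          intro he
          have hz : σ.card = 0 := by
            rw [← he, Finset.card_erase_of_mem hw, hcard]
          rw [Finset.card_eq_zero] at hz
          exact hσ.ne_empty hz
        rw [h0, zero_mul]
      · rfl
    | succ p' =>
      by_cases h : σ.card = p' + 1
      · -- σ.card = p' + 1
        set c' : Fin (p'+1) → Fin (n+1) := fun a => (σ.orderIsoOfFin h a : Fin (n+1)) with hc'
        have hFc : ∀ (x : Vec n) (w : Fin p' → Vec n),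
            WmapF n (fun τ => if τ = σ then (1:ℝ) else 0) p' x w
              = whitneyBar n p' c' x w := by
          intro x w
          unfold WmapF
          rw [Finset.sum_eq_single σ]
          · rw [dif_pos h]
            simp [hc']
          · intro S _ hne
            split
            · simp [hne]
            · rfl
          · intro habs
            exact absurd (Finset.mem_univ σ) habs
        have hL : exd n (WmapF n (fun τ => if τ = σ then (1:ℝ) else 0)) (p'+1) t v
            = exd n (ofDeg n p' (whitneyBar n p' c')) (p'+1) t v := by
          refine Finset.sum_congr rfl fun j _ => ?_
          have he : (fun x => WmapF n (fun τ => if τ = σ then (1:ℝ) else 0) p' x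
              (fun i => v (Fin.succAbove j i)))
              = (fun x => ofDeg n p' (whitneyBar n p' c') p' x
                  (fun i => v (Fin.succAbove j i))) := by
            funext x
            rw [hFc, ofDeg_self]
          rw [he]
        rw [hL, whitney_exd n p' c' t ht v hv]
        have hvan : ∀ k ∈ Finset.univ, k ∉ σᶜ →
            whitneyBar n (p'+1) (Fin.cons k c') t v = 0 := by
          intro k _ hkc
          have hkσ : k ∈ σ := by simpa using hkc
          have hex : ∃ a : Fin (p'+1), c' a = k := by
            have hk' : (k : Fin (n+1)) ∈ Set.range (σ.orderEmbOfFin h) := by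
              rw [Finset.range_orderEmbOfFin]
              exact Finset.mem_coe.mpr hkσ
            obtain ⟨a, ha⟩ := hk'
            exact ⟨a, by rw [hc']; simp only [Finset.coe_orderIsoOfFin_apply]; exact ha⟩
          obtain ⟨a, ha⟩ := hex
          unfold whitneyBar
          rw [whitney_repeat n (p'+1) (Fin.cons k c') (i := a.succ) (j := 0)
            (Fin.succ_ne_zero a) (by rw [Fin.cons_succ, Fin.cons_zero, ha]) t v, mul_zero]
        rw [← Finset.sum_subset (Finset.subset_univ σᶜ) hvan]
        symm
        unfold WmapF
        set T : Finset (Finset (Fin (n+1))) := σᶜ.image (fun k => insert k σ) with hT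
        have hvan2 : ∀ S ∈ Finset.univ, S ∉ T →
            (if hS : S.card = p' + 1 + 1 then dCoD n σ S * whitneyBar n (p'+1)
              (fun a => (S.orderIsoOfFin hS a : Fin (n+1))) t v else 0) = 0 := by
          intro S _ hST
          split
          · rename_i hS
            have h0 : dCoD n σ S = 0 := by
              unfold dCoD
              refine Finset.sum_eq_zero fun w hw => ?_
              rw [if_neg]
              intro he
              apply hST
              rw [hT]
              refine Finset.mem_image.mpr ⟨w, ?_, ?_⟩
              · rw [Finset.mem_compl, ← he]
                exact Finset.notMem_erase w S
              · rw [← he, Finset.insert_erase hw]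
            rw [h0, zero_mul]
          · rfl
        rw [← Finset.sum_subset (Finset.subset_univ T) hvan2, hT,
          Finset.sum_image ?inj]
        case inj =>
          intro a ha b hb hab
          have haσ : a ∉ σ := Finset.mem_compl.mp ha
          have hm : a ∈ insert b σ := (show insert a σ = insert b σ from hab) ▸ Finset.mem_insert_self a σ
          rcases Finset.mem_insert.mp hm with h' | h'
          · exact h'
          · exact absurd h' haσ
        refine Finset.sum_congr rfl fun k hkc => ?_
        have hk : k ∉ σ := Finset.mem_compl.mp hkc
        have h2 : (insert k σ).card = p' + 1 + 1 := by
          rw [Finset.card_insert_of_notMem hk, h]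
        rw [dif_pos h2]
        have hd : dCoD n σ (insert k σ)
            = (-1:ℝ)^((σ.filter (fun u => u < k)).card) := by
          unfold dCoD
          rw [Finset.sum_eq_single k]
          · rw [if_pos (Finset.erase_insert hk)]
            congr 1
            rw [Finset.filter_insert, if_neg (lt_irrefl k)]
          · intro w hw hwk
            rw [if_neg]
            intro he
            have hwσ : w ∈ σ := Finset.mem_of_mem_insert_of_ne hw hwk
            rw [← he] at hwσ
            exact Finset.notMem_erase w _ hwσ
          · intro habs
            exact absurd (Finset.mem_insert_self k σ) habs
        rw [hd]
        exact (whitneyBar_cons_insert n p' σ h k hk h2 t v).symm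
      · -- σ.card ≠ p' + 1
        have hF0 : ∀ (x : Vec n) (w : Fin p' → Vec n),
            WmapF n (fun τ => if τ = σ then (1:ℝ) else 0) p' x w = 0 := by
          intro x w
          unfold WmapF
          refine Finset.sum_eq_zero fun S _ => ?_
          split
          · rename_i hcard
            rcases eq_or_ne S σ with rfl | hne
            · exact absurd hcard h
            · simp [hne]
          · rfl
        have hL : exd n (WmapF n (fun τ => if τ = σ then (1:ℝ) else 0)) (p'+1) t v = 0 := by
          refine Finset.sum_eq_zero fun j _ => ?_
          rw [show (fun x => WmapF n (fun τ => if τ = σ then (1:ℝ) else 0) p' x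
              (fun i => v (Fin.succAbove j i))) = fun _ => (0:ℝ) from funext fun x => hF0 x _]
          simp
        rw [hL]
        symm
        unfold WmapF
        refine Finset.sum_eq_zero fun S _ => ?_
        split
        · rename_i hcard
          have h0 : dCoD n σ S = 0 := by
            unfold dCoD
            refine Finset.sum_eq_zero fun w hw => ?_
            rw [if_neg]
            intro he
            apply h
            rw [← he, Finset.card_erase_of_mem hw, hcard]
            omega
          rw [h0, zero_mul]
        · rfl

end
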